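/- Let {n}(k) := n(k-n)·A₁ for a fixed real A₁ (this is {n} = n(c̃_{n-1}-w) evaluated at w = c̃_{k-1}). With the B^n_s recursion evaluated at w = c̃_{k-1}, one has B^n_{(n)}(2n) = [(2n-1)!!]²·A₁ⁿ for every n ≥ 1, where (n) is the sequence (n,0,0,…) and (2n-1)!! = 1·3·5···(2n-1). -/
import Mathlib


/-- `c̃_j = c̃_0 - j·A₁`. -/
noncomputable def ctilde (c0 A1 : ℝ) (j : ℕ) : ℝ := c0 - (j : ℝ) * A1

/-- total `|s| = ∑ s_i`. -/
def totdeg (s : ℕ →₀ ℕ) : ℕ := s.sum fun _ v => v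

/-- weighted `[s] = ∑ s_i (i+1)`. -/
def wdeg (s : ℕ →₀ ℕ) : ℕ := s.sum fun i v => v * (i + 1)

/-- `s - σ₀`: decrement `s₀` by one. -/
noncomputable def subσ₀ (s : ℕ →₀ ℕ) : ℕ →₀ ℕ := s.update 0 (s 0 - 1)

/-- `s - σᵢ` for `i ≥ 1`: increment `s_{i-1}`, decrement `s_i`. -/
noncomputable def subσ (s : ℕ →₀ ℕ) (i : ℕ) : ℕ →₀ ℕ :=
  (s.update (i - 1) (s (i - 1) + 1)).update i (s i - 1)

/-- The recursion defining the numbers `B^n_s` (7.7). -/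
def BRec (c0 A1 w : ℝ) (B : ℕ → (ℕ →₀ ℕ) → ℝ) : Prop :=
  B 0 0 = 1 ∧ (∀ s : ℕ →₀ ℕ, s ≠ 0 → B 0 s = 0) ∧
    ∀ n : ℕ, ∀ s : ℕ →₀ ℕ, 1 ≤ n →
      B n s =
        (if s 0 = 0 then 0 else
          ((n + totdeg s - 1 : ℕ) : ℝ) * (ctilde c0 A1 (n + totdeg s - 2) - w) *
            ∑ l ∈ Finset.range n, B l (subσ₀ s))
        + ∑ i ∈ s.support.filter (fun i => 1 ≤ i),
            ((s (i - 1) : ℝ) + 1) * ∑ l ∈ Finset.range n, B l (subσ s i)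

lemma totdeg_single (m : ℕ) : totdeg (Finsupp.single 0 m) = m := by
  simp [totdeg, Finsupp.sum_single_index]

lemma subσ₀_single (m : ℕ) : subσ₀ (Finsupp.single 0 (m+1)) = Finsupp.single 0 m := by
  ext a
  simp [subσ₀, Finsupp.coe_update, Function.update_apply, Finsupp.single_apply]
  split_ifs <;> omega

lemma filter_single (m : ℕ) :
    (Finsupp.single (0:ℕ) m).support.filter (fun i => 1 ≤ i) = ∅ := by
  apply Finset.filter_eq_empty_iff.mpr
  intro i hi
  have := Finsupp.support_single_subset hi
  simp at this
  omega


/-- `B^n_{(n)}(2n) = ((2n-1)!!)² · A₁ⁿ`. -/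
theorem stmt_13 (c0 A1 : ℝ) (n : ℕ) (hn : 1 ≤ n)
    (B : ℕ → (ℕ →₀ ℕ) → ℝ)
    (hB : BRec c0 A1 (ctilde c0 A1 (2 * n - 1)) B) :
    B n (Finsupp.single 0 n) =
      (∏ i ∈ Finset.range n, ((2 * i + 1 : ℕ) : ℝ)) ^ 2 * A1 ^ n := by
  obtain ⟨h0, h0', hrec⟩ := hB
  -- Lemma A : B l (single 0 m) = 0 for l < m
  have hA : ∀ m l : ℕ, l < m → B l (Finsupp.single 0 m) = 0 := by
    intro m
    induction m with
    | zero => intro l hl; omega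
    | succ m ih =>
      intro l hl
      rcases Nat.eq_zero_or_pos l with rfl | hl1
      · exact h0' _ (by simp [Finsupp.ne_iff])
      · rw [hrec l _ hl1, filter_single, Finset.sum_empty, add_zero,
          subσ₀_single]
        have hs : (Finsupp.single (0:ℕ) (m+1)) 0 = m + 1 := Finsupp.single_eq_same
        rw [hs, if_neg (by omega)]
        rw [Finset.sum_eq_zero (fun j hj => ih j (by
          simp only [Finset.mem_range] at hj; omega))]
        ring
  -- Main : B m (single 0 m) closed form for m ≤ n
  have hMain : ∀ m : ℕ, m ≤ n → B m (Finsupp.single 0 m)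
      = (∏ i ∈ Finset.range m, ((2*(i:ℝ)+1) * (2*(n:ℝ) - 1 - 2*i))) * A1 ^ m := by
    intro m
    induction m with
    | zero => intro _; simpa using h0
    | succ m ih =>
      intro hmn
      rw [hrec (m+1) _ (by omega), filter_single, Finset.sum_empty, add_zero,
        subσ₀_single, totdeg_single]
      have hs : (Finsupp.single (0:ℕ) (m+1)) 0 = m + 1 := Finsupp.single_eq_same
      rw [hs, if_neg (by omega)]
      have hsum : ∑ l ∈ Finset.range (m+1), B l (Finsupp.single 0 m)
          = B m (Finsupp.single 0 m) := by
        rw [Finset.sum_range_succ,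
          Finset.sum_eq_zero (fun j hj => hA m j (Finset.mem_range.mp hj)),
          zero_add]
      rw [hsum, ih (by omega)]
      have h1 : (m + 1) + (m + 1) - 1 = 2*m + 1 := by omega
      have h2 : (m + 1) + (m + 1) - 2 = 2*m := by omega
      rw [h1, h2]
      have hc : ctilde c0 A1 (2*m) - ctilde c0 A1 (2*n - 1)
          = (2*(n:ℝ) - 1 - 2*m) * A1 := by
        unfold ctilde
        rw [Nat.cast_sub (by omega)]
        push_cast
        ring
      rw [hc, Finset.prod_range_succ]
      push_cast
      ring
  rw [hMain n le_rfl, Finset.prod_mul_distrib]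
  have hrefl : ∏ i ∈ Finset.range n, (2*(n:ℝ) - 1 - 2*i)
      = ∏ i ∈ Finset.range n, (2*(i:ℝ)+1) := by
    rw [← Finset.prod_range_reflect (fun j => 2*(j:ℝ)+1) n]
    apply Finset.prod_congr rfl
    intro i hi
    have hi' := Finset.mem_range.mp hi
    rw [Nat.cast_sub (by omega), Nat.cast_sub (by omega)]
    push_cast
    ring
  rw [hrefl]
  have hcast : ∏ i ∈ Finset.range n, ((2 * i + 1 : ℕ) : ℝ)
      = ∏ i ∈ Finset.range n, (2*(i:ℝ)+1) := by
    apply Finset.prod_congr rfl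
    intro i _
    push_cast
    ring
  rw [hcast]
  ring
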